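/- In a dendroidally ordered set A, if a <_d b then there is a unique child t ∈ b↑ with a ≤_d t. -/

import Mathlib

/-- A (commutative) broad poset: a set `A` with a relation between the free
commutative monoid on `A` (modelled as `Multiset A`) and `A`, satisfying
broad reflexivity, transitivity and antisymmetry. -/
structure BroadPoset (A : Type) where
  le : Multiset A → A → Prop
  le_refl : ∀ a : A, le {a} a
  le_trans : ∀ (a : A) (l : List (Multiset A × A)),
      le (↑(l.map Prod.snd) : Multiset A) a → (∀ p ∈ l, le p.1 p.2) →
      le (l.map Prod.fst).sum a
  le_antisymm : ∀ a a' : A, le {a} a' → le {a'} a → a = a'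

/-- The descendance relation: `b ≤_d a` iff `b` occurs in some `b' ≤ a`. -/
def BroadPoset.descLe {A : Type} (P : BroadPoset A) (b a : A) : Prop :=
  ∃ b' : Multiset A, P.le b' a ∧ b ∈ b'

/-- Strict broad inequality `b < a`. -/
def BroadPoset.blt {A : Type} (P : BroadPoset A) (b : Multiset A) (a : A) : Prop :=
  P.le b a ∧ b ≠ {a}

/-- The induced order on `A⁺`: `s ≤ t` iff `t = t₁·…·tₙ` and `s = s₁·…·sₙ`
with `sᵢ ≤ tᵢ` for each `i`. -/
def BroadPoset.multLe {A : Type} (P : BroadPoset A) (s t : Multiset A) : Prop :=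
  ∃ l : List (Multiset A × A), (↑(l.map Prod.snd) : Multiset A) = t ∧
    (l.map Prod.fst).sum = s ∧ ∀ p ∈ l, P.le p.1 p.2

/-- A leaf: an element with `ĥa = ∅`. -/
def BroadPoset.IsLeaf {A : Type} (P : BroadPoset A) (a : A) : Prop :=
  ∀ b : Multiset A, ¬ P.blt b a

/-- `u` is the maximum of `ĥa = {b | b < a}`, i.e. `u = a↑`; its members are
the children of `a`. -/
def BroadPoset.IsChildSet {A : Type} (P : BroadPoset A) (a : A) (u : Multiset A) : Prop :=
  P.blt u a ∧ ∀ b : Multiset A, P.blt b a → P.multLe b u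

/-- `r` is the root: every element is a descendant of `r` (extremum of `≤_d`). -/
def BroadPoset.IsRoot {A : Type} (P : BroadPoset A) (r : A) : Prop :=
  ∀ a : A, P.descLe a r

/-- Monotone functions between broad posets. -/
def IsMonotone {A B : Type} (P : BroadPoset A) (Q : BroadPoset B) (f : A → B) : Prop :=
  ∀ (b : Multiset A) (a : A), P.le b a → Q.le (b.map f) (f a)

/-- A link: `b < a` such that `b ≤ b' < a` implies `b = b'`. -/
def BroadPoset.IsLink {A : Type} (P : BroadPoset A) (b : Multiset A) (a : A) : Prop :=
  P.blt b a ∧ ∀ b' : Multiset A, P.multLe b b' → P.blt b' a → b = b'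

/-- A dendroidally ordered set: a finite broad poset which is simple, has a
root, and in which every non-leaf has children. -/
structure BroadPoset.IsDendroidal {A : Type} (P : BroadPoset A) : Prop where
  finite : Set.Finite {p : Multiset A × A | P.le p.1 p.2}
  simple : ∀ (b : Multiset A) (a : A), P.le b a → b.Nodup
  root : ∃ r : A, P.IsRoot r
  children : ∀ a : A, ¬ P.IsLeaf a → ∃ u : Multiset A, P.IsChildSet a u

lemma mem_list_sum' {α : Type} {a : α} :
    ∀ {l : List (Multiset α)}, a ∈ l.sum → ∃ s ∈ l, a ∈ s := by
  intro l
  induction l with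
  | nil => simp
  | cons h t ih =>
    intro hmem
    rw [List.sum_cons, Multiset.mem_add] at hmem
    rcases hmem with h1 | h2
    · exact ⟨h, List.mem_cons_self, h1⟩
    · obtain ⟨s, hs, has⟩ := ih h2
      exact ⟨s, List.mem_cons_of_mem _ hs, has⟩

/-- In a dendroidally ordered set, if `a <_d b` then there is a unique child
`t ∈ b↑` with `a ≤_d t`. -/
theorem unique_child_above {A : Type} (P : BroadPoset A) (hP : P.IsDendroidal)
    (a b : A) (hab : P.descLe a b) (hne : a ≠ b)
    (u : Multiset A) (hu : P.IsChildSet b u) :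
    ∃! t : A, t ∈ u ∧ P.descLe a t := by
  classical
  obtain ⟨b', hb'le, hab'⟩ := hab
  have hb'ne : b' ≠ ({b} : Multiset A) := by
    intro h
    subst h
    exact hne (Multiset.mem_singleton.mp hab')
  obtain ⟨l, hsnd, hfst, hple⟩ := hu.2 b' ⟨hb'le, hb'ne⟩
  rw [← hfst] at hab'
  obtain ⟨s, hsl, has⟩ := mem_list_sum' hab'
  obtain ⟨p, hpl, hps⟩ := List.mem_map.mp hsl
  have htu : p.2 ∈ u := by
    rw [← hsnd]
    exact Multiset.mem_coe.mpr (List.mem_map_of_mem (f := Prod.snd) hpl)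
  have hap1 : a ∈ p.1 := hps ▸ has
  refine ⟨p.2, ⟨htu, ⟨p.1, hple p hpl, hap1⟩⟩, ?_⟩
  rintro y ⟨hyu, sy, hsyle, hasy⟩
  by_contra hyt
  -- Build a multiset ≤ b containing `a` twice, contradicting simplicity.
  set t := p.2 with ht
  have h1 : y ∈ u.erase t := (Multiset.mem_erase_of_ne hyt).mpr hyu
  set rest : Multiset A := (u.erase t).erase y with hrest
  have h3 : u = t ::ₘ y ::ₘ rest := by
    rw [hrest, Multiset.cons_erase h1, Multiset.cons_erase htu]
  set L : List (Multiset A × A) :=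
    (p.1, t) :: (sy, y) :: rest.toList.map (fun x => (({x} : Multiset A), x)) with hL
  have hsnd' : (↑(L.map Prod.snd) : Multiset A) = u := by
    rw [hL]
    simp only [List.map_cons, List.map_map]
    have : (Prod.snd ∘ fun x => (({x} : Multiset A), x)) = id := rfl
    rw [this, List.map_id]
    rw [h3]
    rw [show ((t :: y :: rest.toList : List A) : Multiset A) = t ::ₘ y ::ₘ ↑rest.toList from rfl,
      Multiset.coe_toList]
  have hLle : ∀ q ∈ L, P.le q.1 q.2 := by
    intro q hq
    rw [hL, List.mem_cons, List.mem_cons] at hq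
    rcases hq with h | h | h
    · rw [h]; exact hple p hpl
    · rw [h]; exact hsyle
    · obtain ⟨x, _, hx⟩ := List.mem_map.mp h
      rw [← hx]
      exact P.le_refl x
  have hbig : P.le ((L.map Prod.fst).sum) b := by
    apply P.le_trans b L _ hLle
    rw [hsnd']
    exact hu.1.1
  have hnd := hP.simple _ b hbig
  have hcount := Multiset.nodup_iff_count_le_one.mp hnd a
  have hsum : (L.map Prod.fst).sum =
      p.1 + (sy + (rest.toList.map (fun x => ({x} : Multiset A))).sum) := by
    rw [hL]
    simp [List.map_map, Function.comp_def]
  rw [hsum] at hcount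
  simp only [Multiset.count_add] at hcount
  have c1 : 1 ≤ Multiset.count a p.1 := Multiset.one_le_count_iff_mem.mpr hap1
  have c2 : 1 ≤ Multiset.count a sy := Multiset.one_le_count_iff_mem.mpr hasy
  omega
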